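/- (Proposition 3, safety under measurement and actuation uncertainties, higher relative degree.) Let x be a closed-loop trajectory of the sampled-data control-affine system, where h has relative degree r. Let ε_x, ε_u > 0. Suppose that for each k ∈ ℕ there exist a state estimate x̂_k ∈ ℝⁿ with ‖x(t_k) − x̂_k‖₂ ≤ ε_x, a set Ŝ_k ⊆ ℝⁿ (an over-approximation of the reachable tube emanating from the ball of radius ε_x around x̂_k) with x(t) ∈ Ŝ_k for all t ∈ [t_k, t_{k+1}], a real margin φ̂_k with ξ(x′, u) − ξ(x̂_k, u) ≥ φ̂_k for every x′ ∈ Ŝ_k and every u ∈ U, and a desired input u^d_k such that every u ∈ ℝᵐ with ‖u − u^d_k‖₂ ≤ ε_u satisfies u ∈ U and ξ(x̂_k, u) + φ̂_k ≥ 0, i.e. L_f^r h(x̂_k) + L_g L_f^{r−1} h(x̂_k) u + aᵀη(x̂_k) + φ̂_k ≥ 0. Suppose the actually applied input satisfies ‖u_k − u^d_k‖₂ ≤ ε_u for every k, and that s_j(x) ≥ 0 for every j = 0, …, r−1 and every x ∈ ℝⁿ with ‖x − x̂_0‖₂ ≤ ε_x. Then h(x(t)) ≥ 0 for all t ≥ 0.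 -/

import Mathlib

open Set Filter

noncomputable section

/-- `ℝⁿ` as a Euclidean space. -/
abbrev E (n : ℕ) : Type := EuclideanSpace ℝ (Fin n)

/-- Iterated Lie derivative along `f`: `L_f^0 h = h`, `L_f^{k+1} h (x) = ∇(L_f^k h)(x)·f(x)`. -/
noncomputable def lieIter {n : ℕ} (f : E n → E n) (h : E n → ℝ) : ℕ → E n → ℝ
  | 0 => h
  | k + 1 => fun p => fderiv ℝ (lieIter f h k) p (f p)

/-- The cascaded functions `s_0 = h`, `s_k = L_f s_{k-1} + λ_k s_{k-1}` (using `lam k` as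
`λ_k`). -/
noncomputable def cascade {n : ℕ} (f : E n → E n) (h : E n → ℝ) (lam : ℕ → ℝ) :
    ℕ → E n → ℝ
  | 0 => h
  | k + 1 => fun p =>
      fderiv ℝ (cascade f h lam k) p (f p) + lam (k + 1) * cascade f h lam k p

/-- `esym lam k j` is the `j`-th elementary symmetric polynomial `e_j(λ_1, …, λ_k)`
(so `esym lam k 0 = 1`). -/
noncomputable def esym (lam : ℕ → ℝ) (k j : ℕ) : ℝ :=
  ∑ S ∈ (Finset.Icc 1 k).powersetCard j, ∏ i ∈ S, lam i

/-- The higher-order CBF expression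
`ξ(x,u) = L_f^r h(x) + L_g L_f^{r-1} h(x) u + aᵀη(x)`, where `a_i = e_i(λ_1, …, λ_r)` and
`aᵀη(x) = Σ_{i=0}^{r-1} e_{r-i}(λ_1, …, λ_r) · L_f^i h(x)`. -/
noncomputable def xiR {n m : ℕ} (f : E n → E n) (g : E n → E m →L[ℝ] E n)
    (h : E n → ℝ) (lam : ℕ → ℝ) (r : ℕ) (p : E n) (v : E m) : ℝ :=
  lieIter f h r p + fderiv ℝ (lieIter f h (r - 1)) p (g p v)
    + ∑ i ∈ Finset.range r, esym lam r (r - i) * lieIter f h i p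

lemma esym_zero (lam : ℕ → ℝ) (k : ℕ) : esym lam k 0 = 1 := by
  simp [esym]

lemma esym_eq_zero (lam : ℕ → ℝ) {k j : ℕ} (h : k < j) : esym lam k j = 0 := by
  rw [esym, Finset.powersetCard_eq_empty.2 (by simpa using h), Finset.sum_empty]

lemma esym_succ (lam : ℕ → ℝ) (k j : ℕ) :
    esym lam (k + 1) (j + 1) = esym lam k (j + 1) + lam (k + 1) * esym lam k j := by
  classical
  have hnot : (k + 1) ∉ Finset.Icc 1 k := by simp
  have hIcc : Finset.Icc 1 (k + 1) = insert (k + 1) (Finset.Icc 1 k) :=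
    (Finset.insert_Icc_right_eq_Icc_add_one (by omega)).symm
  have hdisj : Disjoint ((Finset.Icc 1 k).powersetCard (j + 1))
      (((Finset.Icc 1 k).powersetCard j).image (insert (k + 1))) := by
    rw [Finset.disjoint_left]
    intro S hS hS'
    obtain ⟨T, hT, rfl⟩ := Finset.mem_image.1 hS'
    have := (Finset.mem_powersetCard.1 hS).1
    exact hnot (this (Finset.mem_insert_self _ _))
  rw [esym, hIcc, Finset.powersetCard_succ_insert hnot, Finset.sum_union hdisj,
    Finset.sum_image ?inj]
  case inj =>
    intro S hS T hT hST
    have hSk : (k+1) ∉ S := fun hx => hnot ((Finset.mem_powersetCard.1 hS).1 hx)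
    have hTk : (k+1) ∉ T := fun hx => hnot ((Finset.mem_powersetCard.1 hT).1 hx)
    rw [← Finset.erase_insert hSk, ← Finset.erase_insert hTk, hST]
  congr 1
  rw [esym, Finset.mul_sum]
  apply Finset.sum_congr rfl
  intro S hS
  have hSk : (k+1) ∉ S := fun hx => hnot ((Finset.mem_powersetCard.1 hS).1 hx)
  rw [Finset.prod_insert hSk]

section Smooth

variable {n : ℕ} {r : ℕ} {f : E n → E n} {h : E n → ℝ}

lemma lieIter_contDiff (hf : ContDiff ℝ (r - 1 : ℕ) f) (hh : ContDiff ℝ (r : ℕ) h) :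
    ∀ i, i + 1 ≤ r → ContDiff ℝ ((r - i : ℕ) : ℕ∞) (lieIter f h i) := by
  intro i
  induction i with
  | zero => intro _; simpa [lieIter] using hh
  | succ i ih =>
    intro hir
    have h2 := ih (by omega)
    have hri : (r - i) = (r - (i + 1)) + 1 := by omega
    rw [hri] at h2
    have hd : ContDiff ℝ ((r - (i + 1) : ℕ) : ℕ∞) (fderiv ℝ (lieIter f h i)) :=
      h2.fderiv_right (by exact_mod_cast le_refl ((r - (i+1)) + 1 : ℕ))
    have hfc : ContDiff ℝ ((r - (i + 1) : ℕ) : ℕ∞) f :=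
      hf.of_le (Nat.cast_le.2 (show r - (i+1) ≤ r - 1 by omega))
    exact hd.clm_apply hfc

lemma lieIter_contDiff_one (hf : ContDiff ℝ (r - 1 : ℕ) f) (hh : ContDiff ℝ (r : ℕ) h)
    {i : ℕ} (hi : i + 1 ≤ r) : ContDiff ℝ 1 (lieIter f h i) :=
  (lieIter_contDiff hf hh i hi).of_le (by exact_mod_cast Nat.one_le_iff_ne_zero.2 (by omega))

lemma cascade_eq (hf : ContDiff ℝ (r - 1 : ℕ) f) (hh : ContDiff ℝ (r : ℕ) h)
    (lam : ℕ → ℝ) :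
    ∀ k, k ≤ r → cascade f h lam k =
      fun p => ∑ i ∈ Finset.range (k + 1), esym lam k (k - i) * lieIter f h i p := by
  intro k
  induction k with
  | zero => intro _; funext p; simp [cascade, lieIter, esym_zero]
  | succ k ih =>
    intro hkr
    have hk : k ≤ r := by omega
    funext p
    have hdiff : ∀ i ∈ Finset.range (k + 1),
        DifferentiableAt ℝ (fun q => esym lam k (k - i) * lieIter f h i q) p := by
      intro i hi
      have : DifferentiableAt ℝ (lieIter f h i) p :=
        ((lieIter_contDiff_one hf hh (by simp at hi; omega)).differentiable
          one_ne_zero).differentiableAt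
      exact this.const_mul _
    have hfd : fderiv ℝ (cascade f h lam k) p (f p)
        = ∑ i ∈ Finset.range (k + 1), esym lam k (k - i) * lieIter f h (i + 1) p := by
      rw [ih hk, fderiv_fun_sum hdiff]
      rw [ContinuousLinearMap.sum_apply]
      apply Finset.sum_congr rfl
      intro i hi
      have hdi : DifferentiableAt ℝ (lieIter f h i) p :=
        ((lieIter_contDiff_one hf hh (by simp at hi; omega)).differentiable
          one_ne_zero).differentiableAt
      rw [fderiv_const_mul hdi, ContinuousLinearMap.smul_apply, smul_eq_mul]
      rfl
    show fderiv ℝ (cascade f h lam k) p (f p) + lam (k + 1) * cascade f h lam k p = _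
    rw [hfd, ih hk]
    -- RHS manipulation
    rw [Finset.sum_range_succ (fun i => esym lam (k+1) (k+1-i) * lieIter f h i p) (k+1)]
    have hrw : ∀ i ∈ Finset.range (k + 1),
        esym lam (k + 1) (k + 1 - i) * lieIter f h i p
          = esym lam k (k + 1 - i) * lieIter f h i p
            + lam (k + 1) * (esym lam k (k - i) * lieIter f h i p) := by
      intro i hi
      have hlt : i < k + 1 := Finset.mem_range.1 hi
      have : k + 1 - i = (k - i) + 1 := by omega
      rw [this, esym_succ]
      ring
    rw [Finset.sum_congr rfl hrw, Finset.sum_add_distrib, ← Finset.mul_sum]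
    have hshift : ∑ i ∈ Finset.range (k + 1), esym lam k (k + 1 - i) * lieIter f h i p
        = ∑ i ∈ Finset.range k, esym lam k (k - i) * lieIter f h (i + 1) p := by
      rw [Finset.sum_range_succ' (fun i => esym lam k (k + 1 - i) * lieIter f h i p) k]
      have h0 : esym lam k (k + 1 - 0) = 0 := esym_eq_zero lam (by omega)
      rw [h0, zero_mul, add_zero]
      apply Finset.sum_congr rfl
      intro i hi
      have : k + 1 - (i + 1) = k - i := by omega
      rw [this]
    rw [hshift]
    rw [Finset.sum_range_succ (fun i => esym lam k (k - i) * lieIter f h (i + 1) p) k]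
    simp [esym_zero]
    ring

end Smooth

section Derived

variable {n m : ℕ} {r : ℕ} {f : E n → E n} {h : E n → ℝ} {lam : ℕ → ℝ}

lemma fderiv_cascade_apply (hf : ContDiff ℝ (r - 1 : ℕ) f) (hh : ContDiff ℝ (r : ℕ) h)
    {k : ℕ} (hk : k + 1 ≤ r) (p : E n) (w : E n) :
    fderiv ℝ (cascade f h lam k) p w
      = ∑ i ∈ Finset.range (k + 1), esym lam k (k - i) * fderiv ℝ (lieIter f h i) p w := by
  have hdiff : ∀ i ∈ Finset.range (k + 1),
      DifferentiableAt ℝ (fun q => esym lam k (k - i) * lieIter f h i q) p := fun i hi =>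
    (((lieIter_contDiff_one hf hh (by simp at hi; omega)).differentiable
      one_ne_zero).differentiableAt).const_mul _
  rw [cascade_eq hf hh lam k (by omega), fderiv_fun_sum hdiff, ContinuousLinearMap.sum_apply]
  apply Finset.sum_congr rfl
  intro i hi
  have hdi : DifferentiableAt ℝ (lieIter f h i) p :=
    ((lieIter_contDiff_one hf hh (by simp at hi; omega)).differentiable one_ne_zero).differentiableAt
  rw [fderiv_const_mul hdi, ContinuousLinearMap.smul_apply, smul_eq_mul]

lemma fderiv_cascade_g {g : E n → E m →L[ℝ] E n}
    (hf : ContDiff ℝ (r - 1 : ℕ) f) (hh : ContDiff ℝ (r : ℕ) h)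
    (hreldeg : ∀ k, k + 2 ≤ r → ∀ p : E n, ∀ v : E m,
      fderiv ℝ (lieIter f h k) p (g p v) = 0)
    {k : ℕ} (hk : k + 1 ≤ r) (p : E n) (v : E m) :
    fderiv ℝ (cascade f h lam k) p (g p v) = fderiv ℝ (lieIter f h k) p (g p v) := by
  rw [fderiv_cascade_apply hf hh hk p (g p v), Finset.sum_range_succ]
  have hz : ∀ i ∈ Finset.range k,
      esym lam k (k - i) * fderiv ℝ (lieIter f h i) p (g p v) = 0 := by
    intro i hi
    rw [hreldeg i (by simp at hi; omega) p v, mul_zero]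
  rw [Finset.sum_eq_zero hz, zero_add]
  simp [esym_zero]

lemma xiR_eq_cascade {g : E n → E m →L[ℝ] E n}
    (hf : ContDiff ℝ (r - 1 : ℕ) f) (hh : ContDiff ℝ (r : ℕ) h)
    (hr : 1 ≤ r) (p : E n) (v : E m) :
    xiR f g h lam r p v = cascade f h lam r p + fderiv ℝ (lieIter f h (r - 1)) p (g p v) := by
  rw [xiR, cascade_eq hf hh lam r le_rfl]
  simp only
  rw [Finset.sum_range_succ (fun i => esym lam r (r - i) * lieIter f h i p) r]
  simp [esym_zero]
  ring

end Derived

/-- Grönwall-type comparison: continuous, piecewise differentiable with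
`y' ≥ -c·y`, nonnegative at `t 0` implies nonnegative. -/
lemma nonneg_of_piecewise (t : ℕ → ℝ) (htmono : StrictMono t)
    (httop : Tendsto t atTop atTop) (y : ℝ → ℝ) (c : ℝ)
    (hc : ContinuousOn y (Ici (t 0))) (hy0 : 0 ≤ y (t 0))
    (hder : ∀ k, ∀ s ∈ Ioo (t k) (t (k + 1)),
      ∃ d, HasDerivAt y d s ∧ -c * y s ≤ d) :
    ∀ s, t 0 ≤ s → 0 ≤ y s := by
  set z : ℝ → ℝ := fun s => Real.exp (c * s) * y s with hzdef
  have hzc : ContinuousOn z (Ici (t 0)) :=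
    ((Real.continuous_exp.comp (continuous_const.mul continuous_id)).continuousOn).mul hc
  have hmono : ∀ k, MonotoneOn z (Icc (t k) (t (k + 1))) := by
    intro k
    have hsub : Icc (t k) (t (k + 1)) ⊆ Ici (t 0) :=
      fun s hs => le_trans (htmono.monotone (Nat.zero_le k)) hs.1
    have hzd : ∀ s ∈ Ioo (t k) (t (k + 1)), ∃ d, HasDerivAt z d s ∧ 0 ≤ d := by
      intro s hs
      obtain ⟨d, hd, hge⟩ := hder k s hs
      have hexp : HasDerivAt (fun τ => Real.exp (c * τ)) (Real.exp (c * s) * c) s := by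
        simpa using ((hasDerivAt_id s).const_mul c).exp
      have := hexp.mul hd
      refine ⟨_, this, ?_⟩
      have hep := Real.exp_pos (c * s)
      nlinarith
    apply monotoneOn_of_deriv_nonneg (convex_Icc _ _) (hzc.mono hsub)
    · intro s hs
      rw [interior_Icc] at hs
      obtain ⟨d, hd, _⟩ := hzd s hs
      exact hd.differentiableAt.differentiableWithinAt
    · intro s hs
      rw [interior_Icc] at hs
      obtain ⟨d, hd, hdn⟩ := hzd s hs
      rw [hd.deriv]; exact hdn
  have hchain : ∀ K, ∀ s ∈ Icc (t 0) (t K), z (t 0) ≤ z s := by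
    intro K
    induction K with
    | zero => intro s hs; have : s = t 0 := le_antisymm hs.2 hs.1; rw [this]
    | succ K ih =>
      intro s hs
      by_cases hsK : s ≤ t K
      · exact ih s ⟨hs.1, hsK⟩
      · push_neg at hsK
        have h0K : t 0 ≤ t K := htmono.monotone (Nat.zero_le K)
        have hKK : t K ≤ t (K + 1) := (htmono (Nat.lt_succ_self K)).le
        calc z (t 0) ≤ z (t K) := ih (t K) ⟨h0K, le_rfl⟩
          _ ≤ z s := hmono K ⟨le_rfl, hKK⟩ ⟨hsK.le, hs.2⟩ hsK.le
  intro s hs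
  obtain ⟨K, hK⟩ : ∃ K, s ≤ t K := by
    have := httop.eventually_ge_atTop s
    obtain ⟨K, hK⟩ := this.exists
    exact ⟨K, hK⟩
  have hz0 : 0 ≤ z (t 0) := mul_nonneg (Real.exp_pos _).le hy0
  have h2 : 0 ≤ Real.exp (c * s) * y s := le_trans hz0 (hchain K s ⟨hs, hK⟩)
  have hep := Real.exp_pos (c * s)
  nlinarith


/-- Proposition 3 (safety under measurement and actuation uncertainties, higher relative
degree): with state estimates `xhat k` accurate to `ε_x`, reachable-tube
over-approximations `Shat k`, margins `φhat k`, and desired inputs `ud k` such that every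
input within `ε_u` of `ud k` lies in `U` and satisfies `ξ(x̂_k, ·) + φhat k ≥ 0`, the
actually applied inputs `u k` (within `ε_u` of `ud k`) keep `h(x(t)) ≥ 0` for all `t ≥ 0`,
provided `s_j ≥ 0` on the `ε_x`-ball around the initial estimate `xhat 0` for
`j = 0, …, r-1`. -/
theorem stmt_9 {n m : ℕ} (r : ℕ) (hr : 2 ≤ r)
    (f : E n → E n) (hfl : LocallyLipschitz f) (hf : ContDiff ℝ (r - 1 : ℕ) f)
    (g : E n → E m →L[ℝ] E n) (hgl : LocallyLipschitz g)
    (U : Set (E m))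
    (h : E n → ℝ) (hh : ContDiff ℝ (r : ℕ) h)
    (lam : ℕ → ℝ) (hlam : ∀ i, 1 ≤ i → i ≤ r → 0 < lam i)
    (hreldeg : ∀ k, k + 2 ≤ r → ∀ p : E n, ∀ v : E m,
      fderiv ℝ (lieIter f h k) p (g p v) = 0)
    (t : ℕ → ℝ) (ht0 : t 0 = 0) (htmono : StrictMono t)
    (httop : Tendsto t atTop atTop)
    (u : ℕ → E m)
    (x : ℝ → E n) (hxc : ContinuousOn x (Ici (0 : ℝ)))
    (hode : ∀ k, ∀ s ∈ Ioo (t k) (t (k + 1)),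
      HasDerivAt x (f (x s) + g (x s) (u k)) s)
    (εx εu : ℝ) (hεx : 0 < εx) (hεu : 0 < εu)
    (xhat : ℕ → E n) (hmeas : ∀ k, ‖x (t k) - xhat k‖ ≤ εx)
    (Shat : ℕ → Set (E n))
    (hreach : ∀ k, ∀ s ∈ Icc (t k) (t (k + 1)), x s ∈ Shat k)
    (φhat : ℕ → ℝ)
    (hmargin : ∀ k, ∀ x' ∈ Shat k, ∀ v ∈ U,
      φhat k ≤ xiR f g h lam r x' v - xiR f g h lam r (xhat k) v)
    (ud : ℕ → E m)
    (hdes : ∀ k, ∀ v : E m, ‖v - ud k‖ ≤ εu →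
      v ∈ U ∧ 0 ≤ xiR f g h lam r (xhat k) v + φhat k)
    (hact : ∀ k, ‖u k - ud k‖ ≤ εu)
    (hinit : ∀ j < r, ∀ p : E n, ‖p - xhat 0‖ ≤ εx → 0 ≤ cascade f h lam j p) :
    ∀ s, 0 ≤ s → 0 ≤ h (x s) := by
  obtain ⟨q, rfl⟩ : ∃ q, r = q + 1 := ⟨r - 1, by omega⟩
  have hq1 : 1 ≤ q := by omega
  -- differentiability of the cascade functions
  have hlie_diff : ∀ i, i ≤ q → Differentiable ℝ (lieIter f h i) := by
    intro i hi
    exact (lieIter_contDiff_one hf hh (by omega)).differentiable one_ne_zero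
  have hcas_diff : ∀ j, j ≤ q → Differentiable ℝ (cascade f h lam j) := by
    intro j hj
    rw [cascade_eq hf hh lam j (by omega)]
    apply Differentiable.fun_sum
    intro i hi
    exact (hlie_diff i (by simp at hi; omega)).const_mul _
  -- derivative of the cascade along the trajectory
  have htraj : ∀ j, j ≤ q → ∀ k, ∀ s, s ∈ Ioo (t k) (t (k + 1)) →
      HasDerivAt (fun τ => cascade f h lam j (x τ))
        (fderiv ℝ (cascade f h lam j) (x s) (f (x s) + g (x s) (u k))) s := by
    intro j hj k s hs
    exact ((hcas_diff j hj).differentiableAt.hasFDerivAt).comp_hasDerivAt s (hode k s hs)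
  -- nonnegativity of ξ along the trajectory
  have hxi : ∀ k, ∀ s, s ∈ Icc (t k) (t (k + 1)) →
      0 ≤ xiR f g h lam (q + 1) (x s) (u k) := by
    intro k s hs
    obtain ⟨hU, hpos⟩ := hdes k (u k) (hact k)
    have := hmargin k (x s) (hreach k s hs) (u k) hU
    linarith
  -- unfolding the cascade recursion
  have hfpart : ∀ j, ∀ p : E n, fderiv ℝ (cascade f h lam j) p (f p)
      = cascade f h lam (j + 1) p - lam (j + 1) * cascade f h lam j p := by
    intro j p
    rw [show cascade f h lam (j + 1) = fun p =>
      fderiv ℝ (cascade f h lam j) p (f p) + lam (j + 1) * cascade f h lam j p from rfl]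
    ring
  -- the downward induction
  have key : ∀ d : ℕ, ∀ s, 0 ≤ s → 0 ≤ cascade f h lam (q - d) (x s) := by
    intro d
    induction d with
    | zero =>
      simp only [Nat.sub_zero]
      have hcont : ContinuousOn (fun τ => cascade f h lam q (x τ)) (Ici (t 0)) := by
        rw [ht0]
        exact ((hcas_diff q le_rfl).continuous).comp_continuousOn hxc
      have hini : 0 ≤ cascade f h lam q (x (t 0)) :=
        hinit q (by omega) (x (t 0)) (hmeas 0)
      have hder : ∀ k, ∀ s ∈ Ioo (t k) (t (k + 1)), ∃ dv,
          HasDerivAt (fun τ => cascade f h lam q (x τ)) dv s ∧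
          -(lam (q + 1)) * cascade f h lam q (x s) ≤ dv := by
        intro k s hs
        refine ⟨_, htraj q le_rfl k s hs, ?_⟩
        have hIcc : s ∈ Icc (t k) (t (k + 1)) := ⟨hs.1.le, hs.2.le⟩
        have hgpart := fderiv_cascade_g (lam := lam) hf hh hreldeg
          (le_refl (q + 1)) (x s) (u k)
        have hxieq := xiR_eq_cascade (g := g) (lam := lam) hf hh
          (by omega : 1 ≤ q + 1) (x s) (u k)
        simp only [Nat.add_sub_cancel] at hxieq
        rw [map_add, hfpart q (x s), hgpart]
        have := hxi k s hIcc
        linarith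
      intro s hs
      exact nonneg_of_piecewise t htmono httop _ (lam (q + 1)) hcont
        hini hder s (by rw [ht0]; exact hs)
    | succ d ih =>
      by_cases hd : q - d = 0
      · have heq : q - (d + 1) = q - d := by omega
        rw [heq]; exact ih
      · set j := q - (d + 1) with hjdef
        have hj1 : j + 1 = q - d := by omega
        have hjq : j + 1 ≤ q := by omega
        have hcont : ContinuousOn (fun τ => cascade f h lam j (x τ)) (Ici (t 0)) := by
          rw [ht0]
          exact ((hcas_diff j (by omega)).continuous).comp_continuousOn hxc
        have hini : 0 ≤ cascade f h lam j (x (t 0)) :=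
          hinit j (by omega) (x (t 0)) (hmeas 0)
        have hder : ∀ k, ∀ s ∈ Ioo (t k) (t (k + 1)), ∃ dv,
            HasDerivAt (fun τ => cascade f h lam j (x τ)) dv s ∧
            -(lam (j + 1)) * cascade f h lam j (x s) ≤ dv := by
          intro k s hs
          refine ⟨_, htraj j (by omega) k s hs, ?_⟩
          have hspos : (0 : ℝ) ≤ s := by
            have : t 0 ≤ t k := htmono.monotone (Nat.zero_le k)
            rw [ht0] at this
            linarith [hs.1]
          have hgpart := fderiv_cascade_g (lam := lam) hf hh hreldeg
            (by omega : j + 1 ≤ q + 1) (x s) (u k)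
          have hzero : fderiv ℝ (lieIter f h j) (x s) (g (x s) (u k)) = 0 :=
            hreldeg j (by omega) (x s) (u k)
          rw [map_add, hfpart j (x s), hgpart, hzero]
          have hnn : 0 ≤ cascade f h lam (j + 1) (x s) := by
            rw [hj1]; exact ih s hspos
          linarith
        intro s hs
        exact nonneg_of_piecewise t htmono httop _ (lam (j + 1)) hcont
          hini hder s (by rw [ht0]; exact hs)
  intro s hs
  have := key q s hs
  rw [Nat.sub_self] at this
  exact this
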